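/- Let J ≥ 1 be an integer. Suppose p_1,...,p_J : [0,1] → ℝ are integrable functions with y ↦ p_j(y)/y integrable on (0,1], satisfying for all x ∈ [0,1]: p_j(x) ≥ 0 for all j; p_j(x) ≤ ∫_0^x (1/y)·[p_{j+1}(y) − p_j(y)] dy for 1 ≤ j < J; and p_J(x) ≤ 1 − ∫_0^x p_J(y)/y dy. Suppose q_1,...,q_J : [0,1] → ℝ are integrable functions satisfying for all x ∈ (0,1]: q_j(x) ≥ 0 for all j; q_1(x) + (1/x)·∫_x^1 q_1(y) dy ≥ 1; and q_j(x) + (1/x)·∫_x^1 [q_j(y) − q_{j−1}(y)] dy ≥ 1 for 1 < j ≤ J. Then ∑_{j=1}^J ∫_0^1 p_j(x) dx ≤ ∫_0^1 q_J(x) dx. -/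

import Mathlib

open MeasureTheory intervalIntegral

noncomputable def dualityF (p : ℕ → ℝ → ℝ) (j : ℕ) (x : ℝ) : ℝ :=
  ∫ t in Set.Ioc (0:ℝ) x, p j t / t

noncomputable def dualityQ (q : ℕ → ℝ → ℝ) (j : ℕ) (x : ℝ) : ℝ :=
  if j = 0 then 0 else q j x

noncomputable def dualityG (q : ℕ → ℝ → ℝ) (j : ℕ) (x : ℝ) : ℝ :=
  ∫ y in Set.Ioc x 1, (dualityQ q j y - dualityQ q (j-1) y)

lemma myFubini_triangle (f g : ℝ → ℝ)
    (hf : IntegrableOn f (Set.Ioc (0:ℝ) 1) volume)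
    (hg : IntegrableOn g (Set.Ioc (0:ℝ) 1) volume) :
    ∫ x in Set.Ioc (0:ℝ) 1, f x * ∫ y in Set.Ioc x 1, g y
      = ∫ y in Set.Ioc (0:ℝ) 1, (∫ x in Set.Ioc (0:ℝ) y, f x) * g y := by
  set μ : Measure ℝ := volume.restrict (Set.Ioc 0 1) with hμ
  have hs : MeasurableSet {z : ℝ × ℝ | z.1 < z.2} :=
    measurableSet_lt measurable_fst measurable_snd
  have hFint : Integrable
      (Function.uncurry fun x y =>
        ({z : ℝ × ℝ | z.1 < z.2}).indicator (fun z => f z.1 * g z.2) (x, y)) (μ.prod μ) := by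
    have := (hf.mul_prod hg).indicator hs
    exact this
  have hswap := MeasureTheory.integral_integral_swap hFint
  have hL : ∫ x, (∫ y, ({z : ℝ × ℝ | z.1 < z.2}).indicator (fun z => f z.1 * g z.2) (x, y) ∂μ) ∂μ
      = ∫ x in Set.Ioc (0:ℝ) 1, f x * ∫ y in Set.Ioc x 1, g y := by
    apply setIntegral_congr_fun measurableSet_Ioc
    intro x hx
    dsimp only
    have h1 : (fun y => ({z : ℝ × ℝ | z.1 < z.2}).indicator (fun z => f z.1 * g z.2) (x, y))
        = (Set.Ioi x).indicator (fun y => f x * g y) := by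
      ext y
      by_cases h : x < y
      · rw [Set.indicator_of_mem (by exact h) , Set.indicator_of_mem (by exact h)]
      · rw [Set.indicator_of_notMem (by exact h), Set.indicator_of_notMem (by exact h)]
    rw [h1, MeasureTheory.integral_indicator measurableSet_Ioi, hμ, Measure.restrict_restrict measurableSet_Ioi]
    have h2 : Set.Ioi x ∩ Set.Ioc 0 1 = Set.Ioc x 1 := by
      ext y; simp only [Set.mem_inter_iff, Set.mem_Ioi, Set.mem_Ioc]
      constructor
      · rintro ⟨h1', h2', h3'⟩; exact ⟨h1', h3'⟩
      · rintro ⟨h1', h2'⟩; exact ⟨h1', lt_trans hx.1 h1', h2'⟩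
    rw [h2, MeasureTheory.integral_const_mul]
  have hR : ∫ y, (∫ x, ({z : ℝ × ℝ | z.1 < z.2}).indicator (fun z => f z.1 * g z.2) (x, y) ∂μ) ∂μ
      = ∫ y in Set.Ioc (0:ℝ) 1, (∫ x in Set.Ioc (0:ℝ) y, f x) * g y := by
    apply setIntegral_congr_fun measurableSet_Ioc
    intro y hy
    dsimp only
    have h1 : (fun x => ({z : ℝ × ℝ | z.1 < z.2}).indicator (fun z => f z.1 * g z.2) (x, y))
        = (Set.Iio y).indicator (fun x => f x * g y) := by
      ext x
      by_cases h : x < y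
      · rw [Set.indicator_of_mem (by exact h), Set.indicator_of_mem (by exact h)]
      · rw [Set.indicator_of_notMem (by exact h), Set.indicator_of_notMem (by exact h)]
    rw [h1, MeasureTheory.integral_indicator measurableSet_Iio, hμ, Measure.restrict_restrict measurableSet_Iio]
    have h2 : Set.Iio y ∩ Set.Ioc 0 1 = Set.Ioo 0 y := by
      ext x; simp only [Set.mem_inter_iff, Set.mem_Iio, Set.mem_Ioc, Set.mem_Ioo]
      constructor
      · rintro ⟨h1', h2', h3'⟩; exact ⟨h2', h1'⟩
      · rintro ⟨h1', h2'⟩; exact ⟨h2', h1', le_trans h2'.le hy.2⟩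
    rw [h2, MeasureTheory.integral_mul_const]
    congr 1
    exact setIntegral_congr_set Ioo_ae_eq_Ioc
  rw [← hL, ← hR] at *
  exact hswap

/-- Weak duality between the continuous linear program `CP(J)` (primal solutions `p`)
and its dual `CD(J)` (dual solutions `q`) for the `J`-choice secretary problem in the
infinite model: the primal objective `∑_j ∫_0^1 p_j` is at most the dual objective
`∫_0^1 q_J`. -/
theorem weak_duality_CP_CD
    (J : ℕ) (hJ : 1 ≤ J) (p q : ℕ → ℝ → ℝ)
    -- integrability assumptions
    (hp_int : ∀ j ∈ Finset.Icc 1 J, IntervalIntegrable (p j) volume 0 1)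
    (hp_div_int : ∀ j ∈ Finset.Icc 1 J,
      IntegrableOn (fun y => p j y / y) (Set.Ioc (0 : ℝ) 1) volume)
    (hq_int : ∀ j ∈ Finset.Icc 1 J, IntervalIntegrable (q j) volume 0 1)
    -- primal feasibility
    (hp_nonneg : ∀ j ∈ Finset.Icc 1 J, ∀ x ∈ Set.Icc (0 : ℝ) 1, 0 ≤ p j x)
    (hp_mid : ∀ j : ℕ, 1 ≤ j → j < J → ∀ x ∈ Set.Icc (0 : ℝ) 1,
      p j x ≤ ∫ y in (0 : ℝ)..x, (p (j + 1) y - p j y) / y)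
    (hp_last : ∀ x ∈ Set.Icc (0 : ℝ) 1,
      p J x ≤ 1 - ∫ y in (0 : ℝ)..x, p J y / y)
    -- dual feasibility
    (hq_nonneg : ∀ j ∈ Finset.Icc 1 J, ∀ x ∈ Set.Ioc (0 : ℝ) 1, 0 ≤ q j x)
    (hq_first : ∀ x ∈ Set.Ioc (0 : ℝ) 1,
      1 ≤ q 1 x + (1 / x) * ∫ y in x..(1 : ℝ), q 1 y)
    (hq_mid : ∀ j : ℕ, 1 < j → j ≤ J → ∀ x ∈ Set.Ioc (0 : ℝ) 1,
      1 ≤ q j x + (1 / x) * ∫ y in x..(1 : ℝ), (q j y - q (j - 1) y)) :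
    ∑ j ∈ Finset.Icc 1 J, (∫ x in (0 : ℝ)..1, p j x) ≤ ∫ x in (0 : ℝ)..1, q J x := by
  -- basic integrability facts
  have hpI : ∀ j ∈ Finset.Icc 1 J, IntegrableOn (p j) (Set.Ioc (0:ℝ) 1) volume := fun j hj =>
    (intervalIntegrable_iff_integrableOn_Ioc_of_le zero_le_one).1 (hp_int j hj)
  have hqI : ∀ j ∈ Finset.Icc 1 J, IntegrableOn (q j) (Set.Ioc (0:ℝ) 1) volume := fun j hj =>
    (intervalIntegrable_iff_integrableOn_Ioc_of_le zero_le_one).1 (hq_int j hj)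
  have hQI : ∀ j, j ≤ J → IntegrableOn (dualityQ q j) (Set.Ioc (0:ℝ) 1) volume := by
    intro j hj
    rcases Nat.eq_zero_or_pos j with h0 | h1
    · subst h0
      have : dualityQ q 0 = fun _ => (0:ℝ) := by funext x; simp [dualityQ]
      rw [this]
      exact integrableOn_zero
    · have : dualityQ q j = q j := by
        funext x; simp [dualityQ, Nat.pos_iff_ne_zero.1 h1]
      rw [this]
      exact hqI j (Finset.mem_Icc.2 ⟨h1, hj⟩)
  have hgI : ∀ j ∈ Finset.Icc 1 J,
      IntegrableOn (fun y => dualityQ q j y - dualityQ q (j-1) y) (Set.Ioc (0:ℝ) 1) volume := by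
    intro j hj
    rw [Finset.mem_Icc] at hj
    exact (hQI j hj.2).sub (hQI (j-1) (le_trans (Nat.sub_le _ _) hj.2))
  -- F facts
  have hFval : ∀ j, ∀ x ∈ Set.Icc (0:ℝ) 1,
      (∫ y in (0:ℝ)..x, p j y / y) = dualityF p j x := by
    intro j x hx
    rw [intervalIntegral.integral_of_le hx.1]
    rfl
  have hFc : ∀ j ∈ Finset.Icc 1 J, ContinuousOn (dualityF p j) (Set.Icc 0 1) := by
    intro j hj
    exact intervalIntegral.continuousOn_primitive
      ((integrableOn_Icc_iff_integrableOn_Ioc).2 (hp_div_int j hj))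
  have hFbd : ∀ j ∈ Finset.Icc 1 J, ∀ x ∈ Set.Icc (0:ℝ) 1,
      ‖dualityF p j x‖ ≤ ∫ t in Set.Ioc (0:ℝ) 1, ‖p j t / t‖ := by
    intro j hj x hx
    refine (MeasureTheory.norm_integral_le_integral_norm _).trans ?_
    exact setIntegral_mono_set (hp_div_int j hj).norm
      (Filter.Eventually.of_forall fun t => norm_nonneg _)
      ((Set.Ioc_subset_Ioc_right hx.2).eventuallyLE)
  -- G facts
  have hGc : ∀ j ∈ Finset.Icc 1 J, ContinuousOn (dualityG q j) (Set.Icc 0 1) := by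
    intro j hj
    have hint := hgI j hj
    have heq : Set.EqOn (dualityG q j)
        (fun x => (∫ y in Set.Ioc (0:ℝ) 1, (dualityQ q j y - dualityQ q (j-1) y))
          - ∫ y in Set.Ioc (0:ℝ) x, (dualityQ q j y - dualityQ q (j-1) y)) (Set.Icc 0 1) := by
      intro x hxI
      have hu2 : Set.Ioc (0:ℝ) x ∪ Set.Ioc x 1 = Set.Ioc (0:ℝ) 1 :=
        Set.Ioc_union_Ioc_eq_Ioc hxI.1 hxI.2
      have h1 : IntegrableOn (fun y => dualityQ q j y - dualityQ q (j-1) y)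
          (Set.Ioc (0:ℝ) x) volume :=
        hint.mono_set (by rw [← hu2]; exact Set.subset_union_left)
      have h2 : IntegrableOn (fun y => dualityQ q j y - dualityQ q (j-1) y)
          (Set.Ioc x 1) volume :=
        hint.mono_set (by rw [← hu2]; exact Set.subset_union_right)
      have h3 := MeasureTheory.setIntegral_union (Set.Ioc_disjoint_Ioc_of_le le_rfl)
        measurableSet_Ioc h1 h2
      rw [hu2] at h3
      simp only [dualityG]
      linarith
    exact (continuousOn_const.sub (intervalIntegral.continuousOn_primitive
      ((integrableOn_Icc_iff_integrableOn_Ioc).2 hint))).congr heq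
  have hGbd : ∀ j ∈ Finset.Icc 1 J, ∀ x ∈ Set.Icc (0:ℝ) 1,
      ‖dualityG q j x‖ ≤ ∫ t in Set.Ioc (0:ℝ) 1, ‖dualityQ q j t - dualityQ q (j-1) t‖ := by
    intro j hj x hx
    refine (MeasureTheory.norm_integral_le_integral_norm _).trans ?_
    exact setIntegral_mono_set (hgI j hj).norm
      (Filter.Eventually.of_forall fun t => norm_nonneg _)
      ((Set.Ioc_subset_Ioc_left hx.1).eventuallyLE)
  -- product integrability
  have hAint : ∀ j ∈ Finset.Icc 1 J,
      Integrable (fun x => dualityG q j x * (p j x / x))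
        (volume.restrict (Set.Ioc (0:ℝ) 1)) := by
    intro j hj
    refine Integrable.bdd_mul
      (c := ∫ t in Set.Ioc (0:ℝ) 1, ‖dualityQ q j t - dualityQ q (j-1) t‖)
      (hp_div_int j hj)
      (((hGc j hj).mono Set.Ioc_subset_Icc_self).aestronglyMeasurable measurableSet_Ioc) ?_
    exact (ae_restrict_iff' measurableSet_Ioc).2 (Filter.Eventually.of_forall fun x hx =>
      hGbd j hj x (Set.Ioc_subset_Icc_self hx))
  have hBint : ∀ j ∈ Finset.Icc 1 J,
      Integrable (fun x => dualityF p j x * (dualityQ q j x - dualityQ q (j-1) x))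
        (volume.restrict (Set.Ioc (0:ℝ) 1)) := by
    intro j hj
    refine Integrable.bdd_mul
      (c := ∫ t in Set.Ioc (0:ℝ) 1, ‖p j t / t‖)
      (hgI j hj)
      (((hFc j hj).mono Set.Ioc_subset_Icc_self).aestronglyMeasurable measurableSet_Ioc) ?_
    exact (ae_restrict_iff' measurableSet_Ioc).2 (Filter.Eventually.of_forall fun x hx =>
      hFbd j hj x (Set.Ioc_subset_Icc_self hx))
  -- dual feasibility in terms of G
  have hdual : ∀ j ∈ Finset.Icc 1 J, ∀ x ∈ Set.Ioc (0:ℝ) 1,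
      1 ≤ dualityQ q j x + (1/x) * dualityG q j x := by
    intro j hj x hx
    rw [Finset.mem_Icc] at hj
    rcases eq_or_lt_of_le hj.1 with h1 | h1
    · -- j = 1
      obtain rfl : j = 1 := h1.symm
      have hG : dualityG q 1 x = ∫ y in x..(1:ℝ), q 1 y := by
        rw [intervalIntegral.integral_of_le hx.2]
        apply setIntegral_congr_fun measurableSet_Ioc
        intro y _
        simp [dualityQ]
      have hQ1 : dualityQ q 1 x = q 1 x := by simp [dualityQ]
      rw [hG, hQ1]
      exact hq_first x hx
    · -- 1 < j
      have hj0 : j ≠ 0 := by omega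
      have hj10 : j - 1 ≠ 0 := by omega
      have hG : dualityG q j x = ∫ y in x..(1:ℝ), (q j y - q (j-1) y) := by
        rw [intervalIntegral.integral_of_le hx.2]
        apply setIntegral_congr_fun measurableSet_Ioc
        intro y _
        simp [dualityQ, hj0, hj10]
      have hQj : dualityQ q j x = q j x := by simp [dualityQ, hj0]
      rw [hG, hQj]
      exact hq_mid j h1 hj.2 x hx
  -- pointwise inequality: a ≤ u
  have hau : ∀ x ∈ Set.Ioc (0:ℝ) 1,
      (∑ j ∈ Finset.Icc 1 J, p j x) - ∑ j ∈ Finset.Icc 1 J, dualityG q j x * (p j x / x)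
        ≤ ∑ j ∈ Finset.Icc 1 J, p j x * dualityQ q j x := by
    intro x hx
    rw [sub_le_iff_le_add, ← Finset.sum_add_distrib]
    apply Finset.sum_le_sum
    intro j hj
    have hp0 : 0 ≤ p j x := hp_nonneg j hj x (Set.Ioc_subset_Icc_self hx)
    have hd := hdual j hj x hx
    have hx0 : (0:ℝ) < x := hx.1
    have hkey : p j x * (dualityQ q j x + (1/x) * dualityG q j x)
        = p j x * dualityQ q j x + dualityG q j x * (p j x / x) := by
      field_simp
    have h2 := mul_le_mul_of_nonneg_left hd hp0
    rw [mul_one, hkey] at h2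
    exact h2
  -- pointwise inequality: u ≤ b
  have hub : ∀ x ∈ Set.Ioc (0:ℝ) 1,
      ∑ j ∈ Finset.Icc 1 J, p j x * dualityQ q j x
        ≤ q J x - ∑ j ∈ Finset.Icc 1 J,
            dualityF p j x * (dualityQ q j x - dualityQ q (j-1) x) := by
    intro x hx
    have hxI : x ∈ Set.Icc (0:ℝ) 1 := Set.Ioc_subset_Icc_self hx
    rw [le_sub_iff_add_le, ← Finset.sum_add_distrib]
    have hFmid : ∀ n, 1 ≤ n → n < J → p n x + dualityF p n x ≤ dualityF p (n+1) x := by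
      intro n h1 h2
      have hint1 : IntervalIntegrable (fun y => p (n+1) y / y) volume 0 x :=
        (intervalIntegrable_iff_integrableOn_Ioc_of_le hxI.1).2
          ((hp_div_int (n+1) (Finset.mem_Icc.2 ⟨by omega, by omega⟩)).mono_set
            (Set.Ioc_subset_Ioc_right hxI.2))
      have hint2 : IntervalIntegrable (fun y => p n y / y) volume 0 x :=
        (intervalIntegrable_iff_integrableOn_Ioc_of_le hxI.1).2
          ((hp_div_int n (Finset.mem_Icc.2 ⟨h1, le_of_lt h2⟩)).mono_set
            (Set.Ioc_subset_Ioc_right hxI.2))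
      have h3 := hp_mid n h1 h2 x hxI
      have h4 : (∫ y in (0:ℝ)..x, (p (n+1) y - p n y) / y)
          = dualityF p (n+1) x - dualityF p n x := by
        have hcong : ∀ y : ℝ, (p (n+1) y - p n y)/y = p (n+1) y / y - p n y / y :=
          fun y => sub_div _ _ _
        simp_rw [hcong]
        rw [intervalIntegral.integral_sub hint1 hint2, hFval (n+1) x hxI, hFval n x hxI]
      rw [h4] at h3
      linarith
    have Key : ∀ n, 1 ≤ n → n ≤ J →
        (∑ j ∈ Finset.Icc 1 n,
            (p j x * dualityQ q j x + dualityF p j x * (dualityQ q j x - dualityQ q (j-1) x)))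
          ≤ dualityQ q n x * (p n x + dualityF p n x) := by
      intro n
      induction n with
      | zero => intro h1 _; exact absurd h1 (by omega)
      | succ m ih =>
        intro _ hmJ
        rw [Finset.sum_Icc_succ_top (by omega : 1 ≤ m + 1)]
        rcases Nat.eq_zero_or_pos m with hm0 | hm1
        · subst hm0
          rw [Finset.Icc_eq_empty (by omega), Finset.sum_empty]
          have hQ0 : dualityQ q 0 x = 0 := by simp [dualityQ]
          simp only [Nat.add_sub_cancel, hQ0, zero_add]
          apply le_of_eq
          ring
        · have hmJ' : m ≤ J := by omega
          have ihm := ih hm1 hmJ'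
          have hq0 : 0 ≤ dualityQ q m x := by
            have := hq_nonneg m (Finset.mem_Icc.2 ⟨hm1, hmJ'⟩) x hx
            simpa [dualityQ, Nat.pos_iff_ne_zero.1 hm1] using this
          have hmid := hFmid m hm1 (by omega)
          have hstep : dualityQ q m x * (p m x + dualityF p m x)
              ≤ dualityQ q m x * dualityF p (m+1) x :=
            mul_le_mul_of_nonneg_left hmid hq0
          simp only [Nat.add_sub_cancel]
          nlinarith [ihm, hstep]
    have hKJ := Key J hJ le_rfl
    have hlast : p J x + dualityF p J x ≤ 1 := by
      have := hp_last x hxI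
      rw [hFval J x hxI] at this
      linarith
    have hqJ0 : 0 ≤ dualityQ q J x := by
      have := hq_nonneg J (Finset.mem_Icc.2 ⟨hJ, le_rfl⟩) x hx
      simpa [dualityQ, Nat.one_le_iff_ne_zero.1 hJ] using this
    have hQJ : dualityQ q J x = q J x := by simp [dualityQ, Nat.one_le_iff_ne_zero.1 hJ]
    rw [hQJ] at hKJ hqJ0
    have hfin : q J x * (p J x + dualityF p J x) ≤ q J x * 1 :=
      mul_le_mul_of_nonneg_left hlast hqJ0
    rw [mul_one] at hfin
    linarith
  -- integrability of the three integrands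
  have ha_int : Integrable (fun x => (∑ j ∈ Finset.Icc 1 J, p j x)
      - ∑ j ∈ Finset.Icc 1 J, dualityG q j x * (p j x / x))
      (volume.restrict (Set.Ioc (0:ℝ) 1)) :=
    (integrable_finset_sum _ fun j hj => hpI j hj).sub (integrable_finset_sum _ hAint)
  have hb_int : Integrable (fun x => q J x
      - ∑ j ∈ Finset.Icc 1 J, dualityF p j x * (dualityQ q j x - dualityQ q (j-1) x))
      (volume.restrict (Set.Ioc (0:ℝ) 1)) :=
    (hqI J (Finset.mem_Icc.2 ⟨hJ, le_rfl⟩)).sub (integrable_finset_sum _ hBint)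
  have hu_meas : AEStronglyMeasurable (fun x => ∑ j ∈ Finset.Icc 1 J, p j x * dualityQ q j x)
      (volume.restrict (Set.Ioc (0:ℝ) 1)) := by
    apply Finset.aestronglyMeasurable_fun_sum
    intro j hj
    exact ((hpI j hj).aestronglyMeasurable.mul
      (hQI j (Finset.mem_Icc.1 hj).2).aestronglyMeasurable)
  have hu_int : Integrable (fun x => ∑ j ∈ Finset.Icc 1 J, p j x * dualityQ q j x)
      (volume.restrict (Set.Ioc (0:ℝ) 1)) := by
    have hdom : Integrable (fun x => ‖(∑ j ∈ Finset.Icc 1 J, p j x)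
        - ∑ j ∈ Finset.Icc 1 J, dualityG q j x * (p j x / x)‖
      + ‖q J x - ∑ j ∈ Finset.Icc 1 J,
          dualityF p j x * (dualityQ q j x - dualityQ q (j-1) x)‖)
        (volume.restrict (Set.Ioc (0:ℝ) 1)) := ha_int.norm.add hb_int.norm
    refine Integrable.mono' hdom hu_meas ?_
    refine (ae_restrict_iff' measurableSet_Ioc).2 (Filter.Eventually.of_forall fun x hx => ?_)
    have h1 := hau x hx
    have h2 := hub x hx
    simp only [Real.norm_eq_abs]
    rw [abs_le]
    constructor
    · have := neg_abs_le ((∑ j ∈ Finset.Icc 1 J, p j x)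
        - ∑ j ∈ Finset.Icc 1 J, dualityG q j x * (p j x / x))
      have h3 := abs_nonneg (q J x
        - ∑ j ∈ Finset.Icc 1 J, dualityF p j x * (dualityQ q j x - dualityQ q (j-1) x))
      linarith
    · have := le_abs_self (q J x
        - ∑ j ∈ Finset.Icc 1 J, dualityF p j x * (dualityQ q j x - dualityQ q (j-1) x))
      have h3 := abs_nonneg ((∑ j ∈ Finset.Icc 1 J, p j x)
        - ∑ j ∈ Finset.Icc 1 J, dualityG q j x * (p j x / x))
      linarith
  -- integrate the pointwise inequalities
  have hmono1 : (∫ x in Set.Ioc (0:ℝ) 1, ((∑ j ∈ Finset.Icc 1 J, p j x)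
        - ∑ j ∈ Finset.Icc 1 J, dualityG q j x * (p j x / x)))
      ≤ ∫ x in Set.Ioc (0:ℝ) 1, ∑ j ∈ Finset.Icc 1 J, p j x * dualityQ q j x :=
    integral_mono_ae ha_int hu_int
      ((ae_restrict_iff' measurableSet_Ioc).2 (Filter.Eventually.of_forall hau))
  have hmono2 : (∫ x in Set.Ioc (0:ℝ) 1, ∑ j ∈ Finset.Icc 1 J, p j x * dualityQ q j x)
      ≤ ∫ x in Set.Ioc (0:ℝ) 1, (q J x
        - ∑ j ∈ Finset.Icc 1 J, dualityF p j x * (dualityQ q j x - dualityQ q (j-1) x)) :=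
    integral_mono_ae hu_int hb_int
      ((ae_restrict_iff' measurableSet_Ioc).2 (Filter.Eventually.of_forall hub))
  -- split the integrals
  have hsplit1 : (∫ x in Set.Ioc (0:ℝ) 1, ((∑ j ∈ Finset.Icc 1 J, p j x)
        - ∑ j ∈ Finset.Icc 1 J, dualityG q j x * (p j x / x)))
      = (∑ j ∈ Finset.Icc 1 J, ∫ x in Set.Ioc (0:ℝ) 1, p j x)
        - ∑ j ∈ Finset.Icc 1 J, ∫ x in Set.Ioc (0:ℝ) 1, dualityG q j x * (p j x / x) := by
    rw [integral_sub (integrable_finset_sum _ fun j hj => hpI j hj)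
      (integrable_finset_sum _ hAint),
      integral_finset_sum _ (fun j hj => hpI j hj), integral_finset_sum _ hAint]
  have hsplit2 : (∫ x in Set.Ioc (0:ℝ) 1, (q J x
        - ∑ j ∈ Finset.Icc 1 J, dualityF p j x * (dualityQ q j x - dualityQ q (j-1) x)))
      = (∫ x in Set.Ioc (0:ℝ) 1, q J x)
        - ∑ j ∈ Finset.Icc 1 J, ∫ x in Set.Ioc (0:ℝ) 1,
            dualityF p j x * (dualityQ q j x - dualityQ q (j-1) x) := by
    rw [integral_sub (hqI J (Finset.mem_Icc.2 ⟨hJ, le_rfl⟩)) (integrable_finset_sum _ hBint),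
      integral_finset_sum _ hBint]
  -- Fubini: the two cross sums agree
  have hfub : ∀ j ∈ Finset.Icc 1 J,
      (∫ x in Set.Ioc (0:ℝ) 1, dualityG q j x * (p j x / x))
        = ∫ x in Set.Ioc (0:ℝ) 1, dualityF p j x * (dualityQ q j x - dualityQ q (j-1) x) := by
    intro j hj
    have h1 : (∫ x in Set.Ioc (0:ℝ) 1, dualityG q j x * (p j x / x))
        = ∫ x in Set.Ioc (0:ℝ) 1, (p j x / x) * dualityG q j x := by
      apply setIntegral_congr_fun measurableSet_Ioc
      intro x _
      ring
    rw [h1]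
    have := myFubini_triangle (fun t => p j t / t)
      (fun y => dualityQ q j y - dualityQ q (j-1) y) (hp_div_int j hj) (hgI j hj)
    simpa [dualityF, dualityG] using this
  have hsums : (∑ j ∈ Finset.Icc 1 J, ∫ x in Set.Ioc (0:ℝ) 1, dualityG q j x * (p j x / x))
      = ∑ j ∈ Finset.Icc 1 J, ∫ x in Set.Ioc (0:ℝ) 1,
          dualityF p j x * (dualityQ q j x - dualityQ q (j-1) x) :=
    Finset.sum_congr rfl hfub
  -- conclude
  have hgoal : (∑ j ∈ Finset.Icc 1 J, ∫ x in Set.Ioc (0:ℝ) 1, p j x)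
      ≤ ∫ x in Set.Ioc (0:ℝ) 1, q J x := by
    rw [hsplit1] at hmono1
    rw [hsplit2] at hmono2
    linarith
  have hconv : ∀ j : ℕ, (∫ x in (0:ℝ)..1, p j x) = ∫ x in Set.Ioc (0:ℝ) 1, p j x :=
    fun j => intervalIntegral.integral_of_le zero_le_one
  rw [intervalIntegral.integral_of_le zero_le_one]
  calc ∑ j ∈ Finset.Icc 1 J, (∫ x in (0:ℝ)..1, p j x)
      = ∑ j ∈ Finset.Icc 1 J, ∫ x in Set.Ioc (0:ℝ) 1, p j x :=
        Finset.sum_congr rfl fun j _ => hconv j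
    _ ≤ ∫ x in Set.Ioc (0:ℝ) 1, q J x := hgoal
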